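/- Let X be a convex polyomino such that V(X) ⊆ ℕ² is a sublattice of ℕ² with minimum (0,0) and maximum (m,n), and fix an injective order-preserving map ω from JI(X) to ℕ. Then for every k ∈ ℕ, the number |M_k(X)| of maximal chains of V(X) with exactly k descents is at most r_k, the number of k-rook configurations in X. -/

import Mathlib

/-!  Cells in ℤ² are identified with their top-right corners: the cell `C v`
is the unit square `[v.1 - 1, v.1] × [v.2 - 1, v.2] ⊆ ℝ²`. -/

/-- Two cells (identified by their top-right corners) are adjacent if they share an edge. -/
def Adj (c d : ℤ × ℤ) : Prop :=
  (c.1 = d.1 ∧ (c.2 = d.2 + 1 ∨ d.2 = c.2 + 1)) ∨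
  (c.2 = d.2 ∧ (c.1 = d.1 + 1 ∨ d.1 = c.1 + 1))

/-- A polyomino: a nonempty finite set of cells, connected under adjacency. -/
def IsPolyomino (X : Finset (ℤ × ℤ)) : Prop :=
  X.Nonempty ∧ ∀ c ∈ X, ∀ d ∈ X,
    Relation.ReflTransGen (fun a b => a ∈ X ∧ b ∈ X ∧ Adj a b) c d

/-- A polyomino is convex if it is both row-convex and column-convex. -/
def IsConvexPoly (X : Finset (ℤ × ℤ)) : Prop :=
  (∀ a b x y : ℤ, (a, y) ∈ X → (b, y) ∈ X → a ≤ x → x ≤ b → (x, y) ∈ X) ∧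
  (∀ a b x y : ℤ, (y, a) ∈ X → (y, b) ∈ X → a ≤ x → x ≤ b → (y, x) ∈ X)

/-- `X` is thin if it contains no 2 × 2 block of four cells. -/
def IsThin (X : Finset (ℤ × ℤ)) : Prop :=
  ¬ ∃ w : ℤ × ℤ, w ∈ X ∧ w + ((1, 0) : ℤ × ℤ) ∈ X ∧
    w + ((0, 1) : ℤ × ℤ) ∈ X ∧ w + ((1, 1) : ℤ × ℤ) ∈ X

/-- `X` is `L`-convex: convex, and any two cells are joined by a monotone path of cells
of `X` changing direction (horizontal to vertical or vice versa) at most once. -/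
def IsLConvexPoly (X : Finset (ℤ × ℤ)) : Prop :=
  IsConvexPoly X ∧ ∀ c ∈ X, ∀ d ∈ X,
    ((∀ x : ℤ, min c.1 d.1 ≤ x → x ≤ max c.1 d.1 → ((x, c.2) : ℤ × ℤ) ∈ X) ∧
     (∀ y : ℤ, min c.2 d.2 ≤ y → y ≤ max c.2 d.2 → ((d.1, y) : ℤ × ℤ) ∈ X)) ∨
    ((∀ y : ℤ, min c.2 d.2 ≤ y → y ≤ max c.2 d.2 → ((c.1, y) : ℤ × ℤ) ∈ X) ∧
     (∀ x : ℤ, min c.1 d.1 ≤ x → x ≤ max c.1 d.1 → ((x, d.2) : ℤ × ℤ) ∈ X))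

/-- The vertex set `V(X)`: all corners of cells of `X`, partially ordered componentwise. -/
def Verts (X : Finset (ℤ × ℤ)) : Set (ℤ × ℤ) :=
  {v | ∃ c ∈ X, v = c ∨ v = c - ((1, 0) : ℤ × ℤ) ∨
    v = c - ((0, 1) : ℤ × ℤ) ∨ v = c - ((1, 1) : ℤ × ℤ)}

/-- Setup: `V(X) ⊆ ℕ²` is a sublattice of `ℕ²` (closed under componentwise max and min)
with minimum `(0,0)` and maximum `(m,n)`. -/
def LatticeSetup (X : Finset (ℤ × ℤ)) (m n : ℕ) : Prop :=
  (∀ a ∈ Verts X, ∀ b ∈ Verts X, a ⊔ b ∈ Verts X ∧ a ⊓ b ∈ Verts X) ∧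
  ((0, 0) : ℤ × ℤ) ∈ Verts X ∧ (((m : ℤ), (n : ℤ)) : ℤ × ℤ) ∈ Verts X ∧
  ∀ v ∈ Verts X, ((0, 0) : ℤ × ℤ) ≤ v ∧ v ≤ (((m : ℤ), (n : ℤ)) : ℤ × ℤ)

/-- Join-irreducible elements of the lattice `V(X)`: nonminimal elements that are not
the join of two elements strictly below them. -/
def JoinIrr (X : Finset (ℤ × ℤ)) : Set (ℤ × ℤ) :=
  {p | p ∈ Verts X ∧ (∃ q ∈ Verts X, q < p) ∧
    ∀ a ∈ Verts X, ∀ b ∈ Verts X, a < p → b < p → a ⊔ b ≠ p}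

/-- `ω` is an injective order-preserving map from `JI(X)` to `ℕ`. -/
def OmegaOK (X : Finset (ℤ × ℤ)) (ω : ℤ × ℤ → ℕ) : Prop :=
  Set.InjOn ω (JoinIrr X) ∧
  ∀ p ∈ JoinIrr X, ∀ q ∈ JoinIrr X, p ≤ q → ω p ≤ ω q

/-- A maximal chain of `V(X)`, written as a monotone unit lattice path
`μ 0 = (0,0) < μ 1 < ⋯ < μ (m+n) = (m,n)` through vertices of `X`
(normalized by `μ i = (m,n)` for `i ≥ m+n`). -/
def IsMaxChainPath (X : Finset (ℤ × ℤ)) (m n : ℕ) (μ : ℕ → ℤ × ℤ) : Prop :=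
  μ 0 = (0, 0) ∧
  (∀ i, i < m + n → μ (i + 1) - μ i = ((1, 0) : ℤ × ℤ) ∨
    μ (i + 1) - μ i = ((0, 1) : ℤ × ℤ)) ∧
  (∀ i, m + n ≤ i → μ i = (((m : ℤ), (n : ℤ)) : ℤ × ℤ)) ∧
  (∀ i, i ≤ m + n → μ i ∈ Verts X)

/-- `i` is a descent of the maximal chain `μ`:  `ω p_i > ω p_{i+1}`, where `p_j` is the
unique join-irreducible `p` with `p ≤ μ j` and `p ≰ μ (j-1)`. -/
def DescentAt (X : Finset (ℤ × ℤ)) (ω : ℤ × ℤ → ℕ) (μ : ℕ → ℤ × ℤ) (i : ℕ) : Prop :=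
  ∃ p ∈ JoinIrr X, ∃ q ∈ JoinIrr X,
    p ≤ μ i ∧ ¬ p ≤ μ (i - 1) ∧ q ≤ μ (i + 1) ∧ ¬ q ≤ μ i ∧ ω q < ω p

/-- The descent set of a maximal chain: descents `i` with `1 ≤ i ≤ m+n-1`. -/
def Des (X : Finset (ℤ × ℤ)) (m n : ℕ) (ω : ℤ × ℤ → ℕ) (μ : ℕ → ℤ × ℤ) : Set ℕ :=
  {i | 1 ≤ i ∧ i < m + n ∧ DescentAt X ω μ i}

/-- `|M_k(X)|`: the number of maximal chains of `V(X)` with exactly `k` descents. -/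
noncomputable def numChains (X : Finset (ℤ × ℤ)) (m n : ℕ) (ω : ℤ × ℤ → ℕ) (k : ℕ) : ℕ :=
  Set.ncard {μ : ℕ → ℤ × ℤ | IsMaxChainPath X m n μ ∧ (Des X m n ω μ).ncard = k}

/-- A `k`-rook configuration in `X`: `k` cells of `X`, no two in the same row or column. -/
def IsRookConfig (X : Finset (ℤ × ℤ)) (k : ℕ) (S : Finset (ℤ × ℤ)) : Prop :=
  ↑S ⊆ (↑X : Set (ℤ × ℤ)) ∧ S.card = k ∧
  ∀ c ∈ S, ∀ d ∈ S, c ≠ d → c.1 ≠ d.1 ∧ c.2 ≠ d.2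

/-- `r_k`: the number of `k`-rook configurations in `X`. -/
noncomputable def rook (X : Finset (ℤ × ℤ)) (k : ℕ) : ℕ :=
  Set.ncard {S : Finset (ℤ × ℤ) | IsRookConfig X k S}

/-- The map `ψ`: sends a maximal chain `μ` to the set of cells `C (μ (i+1))` for `i ∈ Des μ`. -/
def psi (X : Finset (ℤ × ℤ)) (m n : ℕ) (ω : ℤ × ℤ → ℕ) (μ : ℕ → ℤ × ℤ) :
    Set (ℤ × ℤ) :=
  (fun i => μ (i + 1)) '' Des X m n ω μ

/-- The ideal `I_X` of the polyomino ring: generated by the inner 2-minors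
`x_a x_b - x_c x_d` for intervals `[a,b]` of `V(X)`. -/
noncomputable def polyominoIdeal (kk : Type*) [Field kk] (X : Finset (ℤ × ℤ)) :
    Ideal (MvPolynomial (Verts X) kk) :=
  Ideal.span {f | ∃ a b c d : Verts X,
    (a : ℤ × ℤ) < (b : ℤ × ℤ) ∧
    (c : ℤ × ℤ) = (((a : ℤ × ℤ).1, (b : ℤ × ℤ).2) : ℤ × ℤ) ∧
    (d : ℤ × ℤ) = (((b : ℤ × ℤ).1, (a : ℤ × ℤ).2) : ℤ × ℤ) ∧
    f = MvPolynomial.X a * MvPolynomial.X b - MvPolynomial.X c * MvPolynomial.X d}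

/-- `dim_k (k[X])_i`: the dimension of the degree-`i` graded component of `k[X] = R/I_X`,
realized as the image of the homogeneous degree-`i` part of `R` in the quotient. -/
noncomputable def hilbCoeff (kk : Type*) [Field kk] (X : Finset (ℤ × ℤ)) (i : ℕ) : ℕ :=
  Module.finrank kk (Submodule.map
    (Ideal.Quotient.mkₐ kk (polyominoIdeal kk X)).toLinearMap
    (MvPolynomial.homogeneousSubmodule (Verts X) kk i))

/-- The Hilbert series `HS(t) = Σ_{i ≥ 0} dim_k (k[X])_i t^i ∈ ℤ[[t]]`. -/
noncomputable def hilbSeries (kk : Type*) [Field kk] (X : Finset (ℤ × ℤ)) :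
    PowerSeries ℤ :=
  PowerSeries.mk fun i => (hilbCoeff kk X i : ℤ)

/-- The region `⋃ X ⊆ ℝ²` covered by the cells of `X`. -/
def Region (X : Finset (ℤ × ℤ)) : Set (ℝ × ℝ) :=
  ⋃ c ∈ X, Set.Icc (((c.1 : ℝ) - 1, (c.2 : ℝ) - 1) : ℝ × ℝ) (((c.1 : ℝ), (c.2 : ℝ)) : ℝ × ℝ)

/-- Left-boundary vertices: top-left corners of cells of `X` lying on the topological
boundary of the region `⋃ X ⊆ ℝ²`. -/
def LeftBdry (X : Finset (ℤ × ℤ)) : Set (ℤ × ℤ) :=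
  {v | (∃ c ∈ X, v = c - ((1, 0) : ℤ × ℤ)) ∧
    (((v.1 : ℝ), (v.2 : ℝ)) : ℝ × ℝ) ∈ frontier (Region X)}

/-- Bottom-boundary vertices: bottom-right corners of cells of `X` lying on the topological
boundary of the region `⋃ X ⊆ ℝ²`. -/
def BottomBdry (X : Finset (ℤ × ℤ)) : Set (ℤ × ℤ) :=
  {v | (∃ c ∈ X, v = c - ((0, 1) : ℤ × ℤ)) ∧
    (((v.1 : ℝ), (v.2 : ℝ)) : ℝ × ℝ) ∈ frontier (Region X)}

namespace NCR

lemma verts_finite (X : Finset (ℤ × ℤ)) : (Verts X).Finite := by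
  have hsub : Verts X ⊆ ↑(X ∪ X.image (· - ((1,0):ℤ×ℤ)) ∪ X.image (· - ((0,1):ℤ×ℤ))
      ∪ X.image (· - ((1,1):ℤ×ℤ))) := by
    rintro v ⟨c, hc, h⟩
    simp only [Finset.coe_union, Finset.coe_image, Set.mem_union, Set.mem_image,
      Finset.mem_coe]
    rcases h with h|h|h|h
    · exact Or.inl (Or.inl (Or.inl (h ▸ hc)))
    · exact Or.inl (Or.inl (Or.inr ⟨c, hc, h.symm⟩))
    · exact Or.inl (Or.inr ⟨c, hc, h.symm⟩)
    · exact Or.inr ⟨c, hc, h.symm⟩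
  exact (Finset.finite_toSet _).subset hsub

lemma corners_mem {X : Finset (ℤ × ℤ)} {a b : ℤ} (h : ((a,b) : ℤ×ℤ) ∈ X) :
    ((a,b):ℤ×ℤ) ∈ Verts X ∧ ((a-1,b):ℤ×ℤ) ∈ Verts X ∧ ((a,b-1):ℤ×ℤ) ∈ Verts X ∧
      ((a-1,b-1):ℤ×ℤ) ∈ Verts X := by
  refine ⟨⟨_, h, Or.inl rfl⟩, ⟨_, h, Or.inr (Or.inl ?_)⟩, ⟨_, h, Or.inr (Or.inr (Or.inl ?_))⟩,
    ⟨_, h, Or.inr (Or.inr (Or.inr ?_))⟩⟩ <;> simp [Prod.ext_iff]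

lemma verts_elim {X : Finset (ℤ × ℤ)} {a b : ℤ} (h : ((a,b):ℤ×ℤ) ∈ Verts X) :
    ((a,b):ℤ×ℤ) ∈ X ∨ ((a+1,b):ℤ×ℤ) ∈ X ∨ ((a,b+1):ℤ×ℤ) ∈ X ∨ ((a+1,b+1):ℤ×ℤ) ∈ X := by
  obtain ⟨c, hc, hcase⟩ := h
  obtain ⟨c1, c2⟩ := c
  rcases hcase with h|h|h|h <;> simp only [Prod.mk_sub_mk, Prod.mk.injEq] at h <;>
    obtain ⟨h1, h2⟩ := h
  · left; rw [h1, h2]; exact hc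
  · right; left
    have e1 : a + 1 = c1 := by omega
    have e2 : b = c2 := by omega
    rw [e1, e2]; exact hc
  · right; right; left
    have e1 : a = c1 := by omega
    have e2 : b + 1 = c2 := by omega
    rw [e1, e2]; exact hc
  · right; right; right
    have e1 : a + 1 = c1 := by omega
    have e2 : b + 1 = c2 := by omega
    rw [e1, e2]; exact hc

lemma exists_least {S : Set (ℤ×ℤ)} (hfin : S.Finite) (hne : S.Nonempty)
    (hinf : ∀ a ∈ S, ∀ b ∈ S, a ⊓ b ∈ S) : ∃ p ∈ S, ∀ w ∈ S, p ≤ w := by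
  classical
  have hne' : hfin.toFinset.Nonempty := by simpa using hne
  refine ⟨hfin.toFinset.inf' hne' id, ?_, ?_⟩
  · have := Finset.inf'_mem S hinf hfin.toFinset hne' id (fun i hi => by simpa using hi)
    simpa using this
  · intro w hw
    exact Finset.inf'_le id (by simpa using hw)

def IsLCol (X : Finset (ℤ×ℤ)) (c : ℤ) (p : ℤ×ℤ) : Prop :=
  p ∈ Verts X ∧ c ≤ p.1 ∧ ∀ w ∈ Verts X, c ≤ w.1 → p ≤ w

def IsBRow (X : Finset (ℤ×ℤ)) (r : ℤ) (p : ℤ×ℤ) : Prop :=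
  p ∈ Verts X ∧ r ≤ p.2 ∧ ∀ w ∈ Verts X, r ≤ w.2 → p ≤ w

lemma isLCol_unique {X : Finset (ℤ×ℤ)} {c : ℤ} {p p' : ℤ×ℤ}
    (h1 : IsLCol X c p) (h2 : IsLCol X c p') : p = p' :=
  le_antisymm (h1.2.2 _ h2.1 h2.2.1) (h2.2.2 _ h1.1 h1.2.1)

lemma isBRow_unique {X : Finset (ℤ×ℤ)} {r : ℤ} {p p' : ℤ×ℤ}
    (h1 : IsBRow X r p) (h2 : IsBRow X r p') : p = p' :=
  le_antisymm (h1.2.2 _ h2.1 h2.2.1) (h2.2.2 _ h1.1 h1.2.1)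

lemma isLCol_mono {X : Finset (ℤ×ℤ)} {c c' : ℤ} {p p' : ℤ×ℤ}
    (h : IsLCol X c p) (h' : IsLCol X c' p') (hcc : c ≤ c') : p ≤ p' :=
  h.2.2 p' h'.1 (le_trans hcc h'.2.1)

lemma isBRow_mono {X : Finset (ℤ×ℤ)} {r r' : ℤ} {p p' : ℤ×ℤ}
    (h : IsBRow X r p) (h' : IsBRow X r' p') (hrr : r ≤ r') : p ≤ p' :=
  h.2.2 p' h'.1 (le_trans hrr h'.2.1)

lemma exists_isLCol {X : Finset (ℤ×ℤ)} {m n : ℕ} (hlat : LatticeSetup X m n) {c : ℤ}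
    {w0 : ℤ×ℤ} (h0 : w0 ∈ Verts X) (hc : c ≤ w0.1) : ∃ p, IsLCol X c p := by
  obtain ⟨p, hp, hle⟩ := exists_least (S := {w ∈ Verts X | c ≤ w.1})
    ((verts_finite X).subset (fun w hw => hw.1)) ⟨w0, h0, hc⟩
    (fun a ha b hb => ⟨(hlat.1 a ha.1 b hb.1).2, by
      rw [Prod.fst_inf]; exact le_inf ha.2 hb.2⟩)
  exact ⟨p, hp.1, hp.2, fun w hw hcw => hle w ⟨hw, hcw⟩⟩

lemma exists_isBRow {X : Finset (ℤ×ℤ)} {m n : ℕ} (hlat : LatticeSetup X m n) {r : ℤ}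
    {w0 : ℤ×ℤ} (h0 : w0 ∈ Verts X) (hr : r ≤ w0.2) : ∃ p, IsBRow X r p := by
  obtain ⟨p, hp, hle⟩ := exists_least (S := {w ∈ Verts X | r ≤ w.2})
    ((verts_finite X).subset (fun w hw => hw.1)) ⟨w0, h0, hr⟩
    (fun a ha b hb => ⟨(hlat.1 a ha.1 b hb.1).2, by
      rw [Prod.snd_inf]; exact le_inf ha.2 hb.2⟩)
  exact ⟨p, hp.1, hp.2, fun w hw hcw => hle w ⟨hw, hcw⟩⟩

lemma isLCol_joinIrr {X : Finset (ℤ×ℤ)} {m n : ℕ} (hlat : LatticeSetup X m n) {c : ℤ}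
    {p u : ℤ×ℤ} (h : IsLCol X c p) (hu : u ∈ Verts X) (hu1 : u.1 < c) : p ∈ JoinIrr X := by
  refine ⟨h.1, ⟨p ⊓ u, (hlat.1 p h.1 u hu).2,
    lt_of_le_of_ne inf_le_left (fun he => ?_)⟩, ?_⟩
  · have := (inf_eq_left.mp he).1
    have := h.2.1
    omega
  · intro a ha b hb hap hbp habs
    have hmax : a.1 ⊔ b.1 = p.1 := by rw [← Prod.fst_sup, habs]
    have hc' : c ≤ p.1 := h.2.1
    have : c ≤ a.1 ∨ c ≤ b.1 := by
      omega
    rcases this with hca | hcb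
    · exact absurd (h.2.2 a ha hca) hap.2
    · exact absurd (h.2.2 b hb hcb) hbp.2

lemma isBRow_joinIrr {X : Finset (ℤ×ℤ)} {m n : ℕ} (hlat : LatticeSetup X m n) {r : ℤ}
    {p u : ℤ×ℤ} (h : IsBRow X r p) (hu : u ∈ Verts X) (hu2 : u.2 < r) : p ∈ JoinIrr X := by
  refine ⟨h.1, ⟨p ⊓ u, (hlat.1 p h.1 u hu).2,
    lt_of_le_of_ne inf_le_left (fun he => ?_)⟩, ?_⟩
  · have := (inf_eq_left.mp he).2
    have := h.2.1
    omega
  · intro a ha b hb hap hbp habs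
    have hmax : a.2 ⊔ b.2 = p.2 := by rw [← Prod.snd_sup, habs]
    have hc' : r ≤ p.2 := h.2.1
    have : r ≤ a.2 ∨ r ≤ b.2 := by
      omega
    rcases this with hca | hcb
    · exact absurd (h.2.2 a ha hca) hap.2
    · exact absurd (h.2.2 b hb hcb) hbp.2

lemma isLCol_of_joinIrr {X : Finset (ℤ×ℤ)} {m n : ℕ} (hlat : LatticeSetup X m n)
    {u p : ℤ×ℤ} (hu : u ∈ Verts X) (hp : p ∈ JoinIrr X)
    (hle : p ≤ u + (1,0)) (hnle : ¬ p ≤ u) : IsLCol X (u.1+1) p := by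
  obtain ⟨hpV, -, hirr⟩ := hp
  have h1 : p.1 ≤ u.1 + 1 := by simpa using hle.1
  have h2 : p.2 ≤ u.2 := by simpa using hle.2
  have hp1 : p.1 = u.1 + 1 := by
    by_contra hne
    exact hnle ⟨by omega, h2⟩
  refine ⟨hpV, by omega, ?_⟩
  intro w hw hw1
  by_contra hnpw
  refine hirr (p ⊓ w) ((hlat.1 p hpV w hw).2) (p ⊓ u) ((hlat.1 p hpV u hu).2)
    (lt_of_le_of_ne inf_le_left (fun he => hnpw (inf_eq_left.mp he)))
    (lt_of_le_of_ne inf_le_left (fun he => hnle (inf_eq_left.mp he))) ?_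
  refine le_antisymm (sup_le inf_le_left inf_le_left) ?_
  rw [Prod.le_def, Prod.fst_sup, Prod.snd_sup, Prod.fst_inf, Prod.snd_inf,
    Prod.fst_inf, Prod.snd_inf]
  exact ⟨le_sup_of_le_left (le_inf le_rfl (by omega)),
    le_sup_of_le_right (le_inf le_rfl h2)⟩

lemma isBRow_of_joinIrr {X : Finset (ℤ×ℤ)} {m n : ℕ} (hlat : LatticeSetup X m n)
    {u p : ℤ×ℤ} (hu : u ∈ Verts X) (hp : p ∈ JoinIrr X)
    (hle : p ≤ u + (0,1)) (hnle : ¬ p ≤ u) : IsBRow X (u.2+1) p := by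
  obtain ⟨hpV, -, hirr⟩ := hp
  have h1 : p.2 ≤ u.2 + 1 := by simpa using hle.2
  have h2 : p.1 ≤ u.1 := by simpa using hle.1
  have hp1 : p.2 = u.2 + 1 := by
    by_contra hne
    exact hnle ⟨h2, by omega⟩
  refine ⟨hpV, by omega, ?_⟩
  intro w hw hw1
  by_contra hnpw
  refine hirr (p ⊓ w) ((hlat.1 p hpV w hw).2) (p ⊓ u) ((hlat.1 p hpV u hu).2)
    (lt_of_le_of_ne inf_le_left (fun he => hnpw (inf_eq_left.mp he)))
    (lt_of_le_of_ne inf_le_left (fun he => hnle (inf_eq_left.mp he))) ?_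
  refine le_antisymm (sup_le inf_le_left inf_le_left) ?_
  rw [Prod.le_def, Prod.fst_sup, Prod.snd_sup, Prod.fst_inf, Prod.snd_inf,
    Prod.fst_inf, Prod.snd_inf]
  exact ⟨le_sup_of_le_right (le_inf le_rfl h2),
    le_sup_of_le_left (le_inf le_rfl (by omega))⟩

end NCR
namespace NCR

section Chain
variable {X : Finset (ℤ × ℤ)} {m n : ℕ} {μ : ℕ → ℤ × ℤ}

lemma chain_step (hμ : IsMaxChainPath X m n μ) {s : ℕ} (h1 : 1 ≤ s) (h2 : s ≤ m + n) :
    μ s = μ (s-1) + (1,0) ∨ μ s = μ (s-1) + (0,1) := by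
  have := hμ.2.1 (s-1) (by omega)
  have hs : s - 1 + 1 = s := by omega
  rw [hs] at this
  rcases this with h | h
  · left; rw [← h]; abel
  · right; rw [← h]; abel

lemma chain_mono (hμ : IsMaxChainPath X m n μ) {s t : ℕ} (hst : s ≤ t) (ht : t ≤ m + n) :
    μ s ≤ μ t := by
  induction t with
  | zero => simp_all
  | succ t ih =>
    rcases Nat.lt_or_ge s (t+1) with h | h
    · have hle : μ s ≤ μ t := ih (by omega) (by omega)
      rcases chain_step hμ (s := t+1) (by omega) ht with h' | h' <;>
        · rw [h'] ; simp only [Nat.add_sub_cancel]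
          refine le_trans hle (le_trans ?_ le_rfl)
          rw [Prod.le_def]; constructor <;> simp <;> omega
    · have : s = t + 1 := by omega
      rw [this]

lemma chain_sum (hμ : IsMaxChainPath X m n μ) {s : ℕ} (hs : s ≤ m + n) :
    (μ s).1 + (μ s).2 = s := by
  induction s with
  | zero => rw [hμ.1]; simp
  | succ s ih =>
    rcases chain_step hμ (s := s+1) (by omega) hs with h | h <;>
      · rw [h] ; simp only [Nat.add_sub_cancel, Prod.fst_add, Prod.snd_add]
        have := ih (by omega); push_cast; omega

lemma chain_mem (hμ : IsMaxChainPath X m n μ) {s : ℕ} (hs : s ≤ m + n) :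
    μ s ∈ Verts X := hμ.2.2.2 s hs

lemma chain_bounds (hμ : IsMaxChainPath X m n μ) (hlat : LatticeSetup X m n) {s : ℕ}
    (hs : s ≤ m + n) : 0 ≤ (μ s).1 ∧ 0 ≤ (μ s).2 ∧ (μ s).1 ≤ m ∧ (μ s).2 ≤ n := by
  have h := hlat.2.2.2 _ (chain_mem hμ hs)
  exact ⟨h.1.1, h.1.2, h.2.1, h.2.2⟩

lemma const_col (hμ : IsMaxChainPath X m n μ) {a b : ℕ} (hab : a ≤ b) (hb : b ≤ m + n)
    (hcol : (μ a).1 = (μ b).1) {s : ℕ} (h1 : a < s) (h2 : s ≤ b) :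
    μ s = μ (s-1) + (0,1) := by
  rcases chain_step hμ (s := s) (by omega) (by omega) with h | h
  · exfalso
    have m1 : (μ a).1 ≤ (μ (s-1)).1 := (chain_mono hμ (by omega) (by omega)).1
    have m2 : (μ s).1 ≤ (μ b).1 := (chain_mono hμ h2 hb).1
    have : (μ s).1 = (μ (s-1)).1 + 1 := by rw [h]; simp
    omega
  · exact h

lemma const_row (hμ : IsMaxChainPath X m n μ) {a b : ℕ} (hab : a ≤ b) (hb : b ≤ m + n)
    (hrow : (μ a).2 = (μ b).2) {s : ℕ} (h1 : a < s) (h2 : s ≤ b) :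
    μ s = μ (s-1) + (1,0) := by
  rcases chain_step hμ (s := s) (by omega) (by omega) with h | h
  · exact h
  · exfalso
    have m1 : (μ a).2 ≤ (μ (s-1)).2 := (chain_mono hμ (by omega) (by omega)).2
    have m2 : (μ s).2 ≤ (μ b).2 := (chain_mono hμ h2 hb).2
    have : (μ s).2 = (μ (s-1)).2 + 1 := by rw [h]; simp
    omega

end Chain

section Geometry
variable {X : Finset (ℤ × ℤ)}

lemma straddle_col (hpoly : IsPolyomino X) {c d : ℤ×ℤ} (hc : c ∈ X) (hd : d ∈ X)
    {t : ℤ} (h1 : c.1 < t) (h2 : t ≤ d.1) :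
    ∃ y : ℤ, ((t-1, y) : ℤ×ℤ) ∈ X ∧ ((t, y) : ℤ×ℤ) ∈ X := by
  suffices H : ∀ d' : ℤ×ℤ, Relation.ReflTransGen (fun a b => a ∈ X ∧ b ∈ X ∧ Adj a b) c d' →
      t ≤ d'.1 → ∃ y : ℤ, ((t-1, y) : ℤ×ℤ) ∈ X ∧ ((t, y) : ℤ×ℤ) ∈ X by
    exact H d (hpoly.2 c hc d hd) h2
  intro d' hpath
  induction hpath with
  | refl => intro h; omega
  | tail hp hstep ih =>
    rename_i b' d''
    intro htd
    obtain ⟨hbX, hdX, hadj⟩ := hstep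
    rcases le_or_gt t b'.1 with hle | hgt
    · exact ih hle
    · rcases hadj with ⟨heq, _⟩ | ⟨heq2, hor⟩
      · omega
      · rcases hor with hh | hh
        · omega
        · refine ⟨d''.2, ?_, ?_⟩
          · have he : ((t-1, d''.2) : ℤ×ℤ) = b' := by
              rw [Prod.ext_iff]; exact ⟨by omega, heq2.symm⟩
            rw [he]; exact hbX
          · have he : ((t, d''.2) : ℤ×ℤ) = d'' := by
              rw [Prod.ext_iff]; exact ⟨by omega, rfl⟩
            rw [he]; exact hdX

lemma straddle_row (hpoly : IsPolyomino X) {c d : ℤ×ℤ} (hc : c ∈ X) (hd : d ∈ X)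
    {t : ℤ} (h1 : c.2 < t) (h2 : t ≤ d.2) :
    ∃ x : ℤ, ((x, t-1) : ℤ×ℤ) ∈ X ∧ ((x, t) : ℤ×ℤ) ∈ X := by
  suffices H : ∀ d' : ℤ×ℤ, Relation.ReflTransGen (fun a b => a ∈ X ∧ b ∈ X ∧ Adj a b) c d' →
      t ≤ d'.2 → ∃ x : ℤ, ((x, t-1) : ℤ×ℤ) ∈ X ∧ ((x, t) : ℤ×ℤ) ∈ X by
    exact H d (hpoly.2 c hc d hd) h2
  intro d' hpath
  induction hpath with
  | refl => intro h; omega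
  | tail hp hstep ih =>
    rename_i b' d''
    intro htd
    obtain ⟨hbX, hdX, hadj⟩ := hstep
    rcases le_or_gt t b'.2 with hle | hgt
    · exact ih hle
    · rcases hadj with ⟨heq, hor⟩ | ⟨heq2, _⟩
      · rcases hor with hh | hh
        · omega
        · refine ⟨d''.1, ?_, ?_⟩
          · have he : ((d''.1, t-1) : ℤ×ℤ) = b' := by
              rw [Prod.ext_iff]; exact ⟨heq.symm, by omega⟩
            rw [he]; exact hbX
          · have he : ((d''.1, t) : ℤ×ℤ) = d'' := by
              rw [Prod.ext_iff]; exact ⟨rfl, by omega⟩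
            rw [he]; exact hdX
      · omega

lemma col_dichotomy (hconv : IsConvexPoly X) {a b : ℤ} (hs : ((a,b):ℤ×ℤ) ∉ X) :
    (∀ y, ((a,y):ℤ×ℤ) ∈ X → y < b) ∨ (∀ y, ((a,y):ℤ×ℤ) ∈ X → b < y) := by
  rcases em (∃ y, b < y ∧ ((a,y):ℤ×ℤ) ∈ X) with ⟨y2, hy2, h2⟩ | hno
  · right; intro y hy
    by_contra hyb
    exact hs (hconv.2 y y2 b a hy h2 (by omega) (by omega))
  · left; intro y hy
    rcases lt_trichotomy y b with h | h | h
    · exact h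
    · exact absurd (h ▸ hy) hs
    · exact absurd ⟨y, h, hy⟩ hno

lemma row_dichotomy (hconv : IsConvexPoly X) {a b : ℤ} (hs : ((a,b):ℤ×ℤ) ∉ X) :
    (∀ x, ((x,b):ℤ×ℤ) ∈ X → x < a) ∨ (∀ x, ((x,b):ℤ×ℤ) ∈ X → a < x) := by
  rcases em (∃ x, a < x ∧ ((x,b):ℤ×ℤ) ∈ X) with ⟨x2, hx2, h2⟩ | hno
  · right; intro x hx
    by_contra hxa
    exact hs (hconv.1 x x2 a b hx h2 (by omega) (by omega))
  · left; intro x hx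
    rcases lt_trichotomy x a with h | h | h
    · exact h
    · exact absurd (h ▸ hx) hs
    · exact absurd ⟨x, h, hx⟩ hno

end Geometry

end NCR
namespace NCR

/-- If all four corners of a cell are vertices of `X`, the cell belongs to `X`. -/
lemma four_corners {X : Finset (ℤ × ℤ)} (hpoly : IsPolyomino X) (hconv : IsConvexPoly X)
    {a b : ℤ} (h00 : ((a-1,b-1):ℤ×ℤ) ∈ Verts X) (h10 : ((a,b-1):ℤ×ℤ) ∈ Verts X)
    (h01 : ((a-1,b):ℤ×ℤ) ∈ Verts X) (h11 : ((a,b):ℤ×ℤ) ∈ Verts X) :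
    ((a,b):ℤ×ℤ) ∈ X := by
  by_contra hs
  -- cells adjacent to each corner
  have he : ((a-1,b-1):ℤ×ℤ) ∈ X ∨ ((a,b-1):ℤ×ℤ) ∈ X ∨ ((a-1,b):ℤ×ℤ) ∈ X := by
    rcases verts_elim h00 with h|h|h|h
    · exact Or.inl h
    · exact Or.inr (Or.inl (by convert h using 2 <;> omega))
    · exact Or.inr (Or.inr (by convert h using 2 <;> omega))
    · exact absurd (by convert h using 2 <;> omega : ((a,b):ℤ×ℤ) ∈ X) hs
  have hg : ((a,b-1):ℤ×ℤ) ∈ X ∨ ((a+1,b-1):ℤ×ℤ) ∈ X ∨ ((a+1,b):ℤ×ℤ) ∈ X := by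
    rcases verts_elim h10 with h|h|h|h
    · exact Or.inl h
    · exact Or.inr (Or.inl h)
    · exact absurd (by convert h using 2 <;> omega : ((a,b):ℤ×ℤ) ∈ X) hs
    · exact Or.inr (Or.inr (by convert h using 2 <;> omega))
  have hh : ((a-1,b):ℤ×ℤ) ∈ X ∨ ((a-1,b+1):ℤ×ℤ) ∈ X ∨ ((a,b+1):ℤ×ℤ) ∈ X := by
    rcases verts_elim h01 with h|h|h|h
    · exact Or.inl h
    · exact absurd (by convert h using 2 <;> omega : ((a,b):ℤ×ℤ) ∈ X) hs
    · exact Or.inr (Or.inl h)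
    · exact Or.inr (Or.inr (by convert h using 2 <;> omega))
  have hf : ((a+1,b):ℤ×ℤ) ∈ X ∨ ((a,b+1):ℤ×ℤ) ∈ X ∨ ((a+1,b+1):ℤ×ℤ) ∈ X := by
    rcases verts_elim h11 with h|h|h|h
    · exact absurd h hs
    · exact Or.inl h
    · exact Or.inr (Or.inl h)
    · exact Or.inr (Or.inr h)
  rcases col_dichotomy hconv hs with hcol | hcol <;>
    rcases row_dichotomy hconv hs with hrow | hrow
  -- Case 1: col a ⊆ rows < b, row b ⊆ cols < a
  · have hg' : ∃ xg, ((xg,b-1):ℤ×ℤ) ∈ X ∧ a ≤ xg ∧ xg ≤ a + 1 := by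
      rcases hg with h|h|h
      · exact ⟨a, h, le_rfl, by omega⟩
      · exact ⟨a+1, h, by omega, le_rfl⟩
      · exact absurd (hrow _ h) (by omega)
    have hf' : ((a+1,b+1):ℤ×ℤ) ∈ X := by
      rcases hf with h|h|h
      · exact absurd (hrow _ h) (by omega)
      · exact absurd (hcol _ h) (by omega)
      · exact h
    obtain ⟨xg, hxg, hxg1, hxg2⟩ := hg'
    obtain ⟨x, hx1, hx2⟩ := straddle_row hpoly hxg hf' (t := b) (by simp) (by simp)
    have hxa : x < a := hrow _ hx2
    obtain ⟨y', hy1', hy2'⟩ := straddle_col hpoly hx2 hf' (t := a+1) (by simp; omega) (by simp)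
    rw [show (a+1-1 : ℤ) = a by ring] at hy1'
    have hyb' : y' < b := hcol _ hy1'
    have : ((a+1,b):ℤ×ℤ) ∈ X := hconv.2 y' (b+1) b (a+1) hy2' hf' (by omega) (by omega)
    exact absurd (hrow _ this) (by omega)
  -- Case 2: col a ⊆ rows < b, row b ⊆ cols > a
  · have hh' : ((a-1,b+1):ℤ×ℤ) ∈ X := by
      rcases hh with h|h|h
      · exact absurd (hrow _ h) (by omega)
      · exact h
      · exact absurd (hcol _ h) (by omega)
    have hf' : ∃ yf, ((a+1,yf):ℤ×ℤ) ∈ X ∧ b ≤ yf := by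
      rcases hf with h|h|h
      · exact ⟨b, h, le_rfl⟩
      · exact absurd (hcol _ h) (by omega)
      · exact ⟨b+1, h, by omega⟩
    obtain ⟨yf, hyf, hyfb⟩ := hf'
    obtain ⟨y, hy1, hy2⟩ := straddle_col hpoly hh' hyf (t := a) (by simp) (by simp)
    have hyb : y < b := hcol _ hy2
    have : ((a-1,b):ℤ×ℤ) ∈ X := hconv.2 y (b+1) b (a-1) hy1 hh' (by omega) (by omega)
    exact absurd (hrow _ this) (by omega)
  -- Case 3: col a ⊆ rows > b, row b ⊆ cols < a
  · have hg' : ((a+1,b-1):ℤ×ℤ) ∈ X := by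
      rcases hg with h|h|h
      · exact absurd (hcol _ h) (by omega)
      · exact h
      · exact absurd (hrow _ h) (by omega)
    have he' : ∃ ye, ((a-1,ye):ℤ×ℤ) ∈ X ∧ ye ≤ b := by
      rcases he with h|h|h
      · exact ⟨b-1, h, by omega⟩
      · exact absurd (hcol _ h) (by omega)
      · exact ⟨b, h, le_rfl⟩
    obtain ⟨ye, hye, hyeb⟩ := he'
    obtain ⟨y, hy1, hy2⟩ := straddle_col hpoly hye hg' (t := a) (by simp) (by simp)
    have hyb : b < y := hcol _ hy2
    obtain ⟨y', hy1', hy2'⟩ := straddle_col hpoly hy2 hg' (t := a+1) (by simp) (by simp)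
    rw [show (a+1-1 : ℤ) = a by ring] at hy1'
    have hyb' : b < y' := hcol _ hy1'
    have : ((a+1,b):ℤ×ℤ) ∈ X := hconv.2 (b-1) y' b (a+1) hg' hy2' (by omega) (by omega)
    exact absurd (hrow _ this) (by omega)
  -- Case 4: col a ⊆ rows > b, row b ⊆ cols > a
  · have he' : ((a-1,b-1):ℤ×ℤ) ∈ X := by
      rcases he with h|h|h
      · exact h
      · exact absurd (hcol _ h) (by omega)
      · exact absurd (hrow _ h) (by omega)
    have hh' : ∃ yh, ((yh,b+1):ℤ×ℤ) ∈ X ∧ yh ≤ a := by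
      rcases hh with h|h|h
      · exact absurd (hrow _ h) (by omega)
      · exact ⟨a-1, h, by omega⟩
      · exact ⟨a, h, le_rfl⟩
    obtain ⟨yh, hyh, hyha⟩ := hh'
    obtain ⟨x, hx1, hx2⟩ := straddle_row hpoly he' hyh (t := b) (by simp) (by simp)
    have hxa : a < x := hrow _ hx2
    have : ((a,b-1):ℤ×ℤ) ∈ X := hconv.1 (a-1) x a (b-1) he' hx1 (by omega) (by omega)
    exact absurd (hcol _ this) (by omega)

end NCR
namespace NCR

variable {X : Finset (ℤ × ℤ)} {m n : ℕ} {μ : ℕ → ℤ × ℤ} {ω : ℤ × ℤ → ℕ}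

lemma desc_struct (hμ : IsMaxChainPath X m n μ) (hlat : LatticeSetup X m n)
    (hω : OmegaOK X ω) {i : ℕ} (hi1 : 1 ≤ i) (hi2 : i < m + n)
    (hd : DescentAt X ω μ i) :
    (μ i = μ (i-1) + (1,0) ∧ μ (i+1) = μ i + (0,1) ∧
      ∃ p q, IsLCol X ((μ i).1) p ∧ IsBRow X ((μ (i+1)).2) q ∧
        p ∈ JoinIrr X ∧ q ∈ JoinIrr X ∧ ω q < ω p) ∨
    (μ i = μ (i-1) + (0,1) ∧ μ (i+1) = μ i + (1,0) ∧
      ∃ p q, IsBRow X ((μ i).2) p ∧ IsLCol X ((μ (i+1)).1) q ∧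
        p ∈ JoinIrr X ∧ q ∈ JoinIrr X ∧ ω q < ω p) := by
  obtain ⟨p, hpJI, q, hqJI, hp1, hp2, hq1, hq2, hlt⟩ := hd
  have hV0 : μ (i-1) ∈ Verts X := chain_mem hμ (by omega)
  have hVi : μ i ∈ Verts X := chain_mem hμ (by omega)
  have step1 := chain_step hμ (s := i) hi1 (by omega)
  have step2 := chain_step hμ (s := i+1) (by omega) (by omega)
  simp only [Nat.add_sub_cancel] at step2
  rcases step1 with s1 | s1 <;> rcases step2 with s2 | s2
  · -- RR : contradiction
    exfalso
    have hpchar : IsLCol X ((μ (i-1)).1 + 1) p :=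
      isLCol_of_joinIrr hlat hV0 hpJI (s1 ▸ hp1) hp2
    have hqchar : IsLCol X ((μ i).1 + 1) q :=
      isLCol_of_joinIrr hlat hVi hqJI (s2 ▸ hq1) hq2
    have e1 : (μ i).1 = (μ (i-1)).1 + 1 := by rw [s1]; simp
    have hle : p ≤ q := isLCol_mono hpchar hqchar (by omega)
    have := hω.2 p hpJI q hqJI hle
    omega
  · -- RU
    left
    have e1 : (μ i).1 = (μ (i-1)).1 + 1 := by rw [s1]; simp
    have e2 : (μ (i+1)).2 = (μ i).2 + 1 := by rw [s2]; simp
    refine ⟨s1, s2, p, q, ?_, ?_, hpJI, hqJI, hlt⟩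
    · rw [e1]; exact isLCol_of_joinIrr hlat hV0 hpJI (s1 ▸ hp1) hp2
    · rw [e2]; exact isBRow_of_joinIrr hlat hVi hqJI (s2 ▸ hq1) hq2
  · -- UR
    right
    have e1 : (μ i).2 = (μ (i-1)).2 + 1 := by rw [s1]; simp
    have e2 : (μ (i+1)).1 = (μ i).1 + 1 := by rw [s2]; simp
    refine ⟨s1, s2, p, q, ?_, ?_, hpJI, hqJI, hlt⟩
    · rw [e1]; exact isBRow_of_joinIrr hlat hV0 hpJI (s1 ▸ hp1) hp2
    · rw [e2]; exact isLCol_of_joinIrr hlat hVi hqJI (s2 ▸ hq1) hq2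
  · -- UU : contradiction
    exfalso
    have hpchar : IsBRow X ((μ (i-1)).2 + 1) p :=
      isBRow_of_joinIrr hlat hV0 hpJI (s1 ▸ hp1) hp2
    have hqchar : IsBRow X ((μ i).2 + 1) q :=
      isBRow_of_joinIrr hlat hVi hqJI (s2 ▸ hq1) hq2
    have e1 : (μ i).2 = (μ (i-1)).2 + 1 := by rw [s1]; simp
    have hle : p ≤ q := isBRow_mono hpchar hqchar (by omega)
    have := hω.2 p hpJI q hqJI hle
    omega

lemma descent_cell (hpoly : IsPolyomino X) (hconv : IsConvexPoly X)
    (hlat : LatticeSetup X m n) (hω : OmegaOK X ω) (hμ : IsMaxChainPath X m n μ)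
    {i : ℕ} (hi : i ∈ Des X m n ω μ) : μ (i+1) ∈ X := by
  obtain ⟨hi1, hi2, hd⟩ := hi
  set a := (μ (i+1)).1 with ha
  set b := (μ (i+1)).2 with hb
  have h11 : ((a,b):ℤ×ℤ) ∈ Verts X := by
    have := chain_mem hμ (s := i+1) (by omega); simpa using this
  rcases desc_struct hμ hlat hω hi1 hi2 hd with ⟨s1, s2, p, q, hp, hq, hpJI, hqJI, hlt⟩ |
    ⟨s1, s2, p, q, hp, hq, hpJI, hqJI, hlt⟩
  · -- RU : μ i = (a, b-1), μ (i-1) = (a-1, b-1)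
    have hμi : μ i = ((a, b-1) : ℤ×ℤ) := by
      rw [Prod.ext_iff]
      constructor
      · rw [ha, s2]; simp
      · rw [hb, s2]; simp
    have hμi0 : μ (i-1) = ((a-1, b-1) : ℤ×ℤ) := by
      rw [Prod.ext_iff]
      constructor
      · rw [ha, s2, s1]; simp
      · rw [hb, s2, s1]; simp
    have h10 : ((a, b-1):ℤ×ℤ) ∈ Verts X := hμi ▸ chain_mem hμ (by omega)
    have h00 : ((a-1, b-1):ℤ×ℤ) ∈ Verts X := hμi0 ▸ chain_mem hμ (by omega)
    -- q = bottom-row irreducible of row b ; q.1 ≤ a-1 since ¬ p ≤ q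
    have hpa : (μ i).1 = a := by rw [hμi]
    have hnpq : ¬ p ≤ q := fun hle => by have := hω.2 p hpJI q hqJI hle; omega
    have hq1 : q.1 < a := by
      by_contra hge
      exact hnpq ((hpa ▸ hp).2.2 q hq.1 (by omega))
    have hq2 : q.2 = b := by
      have hbq : b ≤ q.2 := hq.2.1
      have : q ≤ μ (i+1) := hq.2.2 _ (chain_mem hμ (by omega)) (le_of_eq hb)
      have := this.2
      omega
    have h01 : ((a-1, b):ℤ×ℤ) ∈ Verts X := by
      have hsup := (hlat.1 q hq.1 (μ (i-1)) (chain_mem hμ (by omega))).1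
      have : q ⊔ μ (i-1) = ((a-1, b) : ℤ×ℤ) := by
        rw [hμi0, ← Prod.mk.eta (p := q), Prod.mk_sup_mk, Prod.mk.injEq]
        constructor <;> omega
      rwa [this] at hsup
    have hfour := four_corners hpoly hconv h00 h10 h01 h11
    rwa [ha, hb, Prod.mk.eta] at hfour
  · -- UR : μ i = (a-1, b), μ (i-1) = (a-1, b-1)
    have hμi : μ i = ((a-1, b) : ℤ×ℤ) := by
      rw [Prod.ext_iff]
      constructor
      · rw [ha, s2]; simp
      · rw [hb, s2]; simp
    have hμi0 : μ (i-1) = ((a-1, b-1) : ℤ×ℤ) := by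
      rw [Prod.ext_iff]
      constructor
      · rw [ha, s2, s1]; simp
      · rw [hb, s2, s1]; simp
    have h01 : ((a-1, b):ℤ×ℤ) ∈ Verts X := hμi ▸ chain_mem hμ (by omega)
    have h00 : ((a-1, b-1):ℤ×ℤ) ∈ Verts X := hμi0 ▸ chain_mem hμ (by omega)
    have hpb : (μ i).2 = b := by rw [hμi]
    have hnpq : ¬ p ≤ q := fun hle => by have := hω.2 p hpJI q hqJI hle; omega
    have hq2 : q.2 < b := by
      by_contra hge
      exact hnpq ((hpb ▸ hp).2.2 q hq.1 (by omega))
    have hq1 : q.1 = a := by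
      have haq : a ≤ q.1 := hq.2.1
      have : q ≤ μ (i+1) := hq.2.2 _ (chain_mem hμ (by omega)) (le_of_eq ha)
      have := this.1
      omega
    have h10 : ((a, b-1):ℤ×ℤ) ∈ Verts X := by
      have hsup := (hlat.1 q hq.1 (μ (i-1)) (chain_mem hμ (by omega))).1
      have : q ⊔ μ (i-1) = ((a, b-1) : ℤ×ℤ) := by
        rw [hμi0, ← Prod.mk.eta (p := q), Prod.mk_sup_mk, Prod.mk.injEq]
        constructor <;> omega
      rwa [this] at hsup
    have hfour := four_corners hpoly hconv h00 h10 h01 h11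
    rwa [ha, hb, Prod.mk.eta] at hfour

end NCR
namespace NCR

variable {X : Finset (ℤ × ℤ)} {m n : ℕ} {μ ν : ℕ → ℤ × ℤ} {ω : ℤ × ℤ → ℕ}

lemma stepRU_ne {v : ℤ×ℤ} : v + (1,0) ≠ v + (0,1) := by
  intro h; have := congrArg Prod.fst h; simp at this

lemma stepUR_ne {v : ℤ×ℤ} : v + (0,1) ≠ v + (1,0) := fun h => stepRU_ne h.symm

lemma descentAt_of_UR (hμ : IsMaxChainPath X m n μ) {t : ℕ} (h1 : 1 ≤ t) (h2 : t < m + n)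
    (s1 : μ t = μ (t-1) + (0,1)) {p q : ℤ×ℤ}
    (hp : IsBRow X ((μ t).2) p) (hq : IsLCol X ((μ (t+1)).1) q)
    (hpJI : p ∈ JoinIrr X) (hqJI : q ∈ JoinIrr X) (hq1 : (μ (t+1)).1 = (μ t).1 + 1)
    (hlt : ω q < ω p) : DescentAt X ω μ t := by
  refine ⟨p, hpJI, q, hqJI, ?_, ?_, ?_, ?_, hlt⟩
  · exact hp.2.2 _ (chain_mem hμ (by omega)) le_rfl
  · intro hle
    have e : (μ t).2 = (μ (t-1)).2 + 1 := by rw [s1]; simp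
    have := hle.2
    have := hp.2.1
    omega
  · exact hq.2.2 _ (chain_mem hμ (by omega)) le_rfl
  · intro hle
    have := hle.1
    have := hq.2.1
    omega

lemma descentAt_of_RU (hμ : IsMaxChainPath X m n μ) {t : ℕ} (h1 : 1 ≤ t) (h2 : t < m + n)
    (s1 : μ t = μ (t-1) + (1,0)) {p q : ℤ×ℤ}
    (hp : IsLCol X ((μ t).1) p) (hq : IsBRow X ((μ (t+1)).2) q)
    (hpJI : p ∈ JoinIrr X) (hqJI : q ∈ JoinIrr X) (hq1 : (μ (t+1)).2 = (μ t).2 + 1)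
    (hlt : ω q < ω p) : DescentAt X ω μ t := by
  refine ⟨p, hpJI, q, hqJI, ?_, ?_, ?_, ?_, hlt⟩
  · exact hp.2.2 _ (chain_mem hμ (by omega)) le_rfl
  · intro hle
    have e : (μ t).1 = (μ (t-1)).1 + 1 := by rw [s1]; simp
    have := hle.1
    have := hp.2.1
    omega
  · exact hq.2.2 _ (chain_mem hμ (by omega)) le_rfl
  · intro hle
    have := hle.2
    have := hq.2.1
    omega

lemma rooksep (hμ : IsMaxChainPath X m n μ) (hlat : LatticeSetup X m n) (hω : OmegaOK X ω)
    {i j : ℕ} (hiD : i ∈ Des X m n ω μ) (hjD : j ∈ Des X m n ω μ) (hij : i < j) :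
    (μ (i+1)).1 < (μ (j+1)).1 ∧ (μ (i+1)).2 < (μ (j+1)).2 := by
  obtain ⟨hi1, hi2, hdi⟩ := hiD
  obtain ⟨hj1, hj2, hdj⟩ := hjD
  have hle : μ (i+1) ≤ μ (j+1) := chain_mono hμ (by omega) (by omega)
  constructor
  · -- columns
    rcases lt_or_eq_of_le hle.1 with h | hE
    · exact h
    exfalso
    rcases desc_struct hμ hlat hω hj1 hj2 hdj with ⟨s1j, s2j, pj, qj, hpj, hqj, hpjJI, hqjJI, hltj⟩ |
      ⟨s1j, s2j, pj, qj, hpj, hqj, hpjJI, hqjJI, hltj⟩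
    · -- RU at j : step j is R
      rcases Nat.lt_or_ge (i+1) j with hgt | hle'
      · have := const_col hμ (a := i+1) (b := j+1) (by omega) (by omega) hE (s := j)
          (by omega) (by omega)
        rw [s1j] at this
        exact stepRU_ne this
      · have hji : j = i + 1 := by omega
        rcases desc_struct hμ hlat hω hi1 hi2 hdi with ⟨s1i, s2i, pi, qi, hpi, hqi, hpiJI, hqiJI, hlti⟩ |
          ⟨s1i, s2i, pi, qi, hpi, hqi, hpiJI, hqiJI, hlti⟩
        · -- RU at i : step i+1 is U, but step j = step i+1 is R
          rw [hji] at s1j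
          simp only [Nat.add_sub_cancel] at s1j
          rw [s1j] at s2i
          exact stepRU_ne s2i
        · -- UR at i
          have hpj' : pj = qi := by
            refine isLCol_unique hpj ?_
            rw [hji]
            exact hqi
          have hmono : pi ≤ qj :=
            isBRow_mono hpi hqj (chain_mono hμ (by omega : i ≤ j+1) (by omega)).2
          have h1 := hω.2 pi hpiJI qj hqjJI hmono
          rw [hpj'] at hltj
          omega
    · -- UR at j : step j+1 is R ; but steps in (i+1, j+1] are U
      have := const_col hμ (a := i+1) (b := j+1) (by omega) (by omega) hE (s := j+1)
        (by omega) (by omega)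
      simp only [Nat.add_sub_cancel] at this
      rw [s2j] at this
      exact stepRU_ne this
  · -- rows
    rcases lt_or_eq_of_le hle.2 with h | hE
    · exact h
    exfalso
    rcases desc_struct hμ hlat hω hj1 hj2 hdj with ⟨s1j, s2j, pj, qj, hpj, hqj, hpjJI, hqjJI, hltj⟩ |
      ⟨s1j, s2j, pj, qj, hpj, hqj, hpjJI, hqjJI, hltj⟩
    · -- RU at j : step j+1 is U, but steps in (i+1, j+1] are R
      have := const_row hμ (a := i+1) (b := j+1) (by omega) (by omega) hE (s := j+1)
        (by omega) (by omega)
      simp only [Nat.add_sub_cancel] at this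
      rw [s2j] at this
      exact stepUR_ne this
    · -- UR at j : step j is U
      rcases Nat.lt_or_ge (i+1) j with hgt | hle'
      · have := const_row hμ (a := i+1) (b := j+1) (by omega) (by omega) hE (s := j)
          (by omega) (by omega)
        rw [s1j] at this
        exact stepUR_ne this
      · have hji : j = i + 1 := by omega
        rcases desc_struct hμ hlat hω hi1 hi2 hdi with ⟨s1i, s2i, pi, qi, hpi, hqi, hpiJI, hqiJI, hlti⟩ |
          ⟨s1i, s2i, pi, qi, hpi, hqi, hpiJI, hqiJI, hlti⟩
        · -- RU at i
          have hpj' : pj = qi := by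
            refine isBRow_unique hpj ?_
            rw [hji]
            exact hqi
          have hmono : pi ≤ qj :=
            isLCol_mono hpi hqj (chain_mono hμ (by omega : i ≤ j+1) (by omega)).1
          have h1 := hω.2 pi hpiJI qj hqjJI hmono
          rw [hpj'] at hltj
          omega
        · -- UR at i : step i+1 is R, but step j = step i+1 is U
          rw [hji] at s1j
          simp only [Nat.add_sub_cancel] at s1j
          rw [s1j] at s2i
          exact stepUR_ne s2i

end NCR
namespace NCR

variable {X : Finset (ℤ × ℤ)} {m n : ℕ} {μ ν : ℕ → ℤ × ℤ} {ω : ℤ × ℤ → ℕ}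

lemma core (hlat : LatticeSetup X m n) (hω : OmegaOK X ω)
    (hμ : IsMaxChainPath X m n μ) (hν : IsMaxChainPath X m n ν)
    {i : ℕ} (hi1 : 1 ≤ i) (him : i ≤ m + n)
    (heq : μ (i-1) = ν (i-1))
    (sμ : μ i = μ (i-1) + (1,0)) (sν : ν i = ν (i-1) + (0,1))
    {p q : ℤ×ℤ} (hp : IsLCol X ((μ (i-1)).1 + 1) p) (hq : IsBRow X ((μ (i-1)).2 + 1) q)
    (hpJI : p ∈ JoinIrr X) (hqJI : q ∈ JoinIrr X)
    (hcase : ω p < ω q) :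
    ∃ s, s ∈ psi X m n ω ν ∧ s ∉ psi X m n ω μ := by
  classical
  set u := μ (i-1) with hu
  have hueq : ν (i-1) = u := heq.symm
  have hνi1 : (ν i).1 = u.1 := by rw [sν, hueq]; simp
  have hνi2 : (ν i).2 = u.2 + 1 := by rw [sν, hueq]; simp
  have hμi1 : (μ i).1 = u.1 + 1 := by rw [sμ]; simp
  have hμi2 : (μ i).2 = u.2 := by rw [sμ]; simp
  have hbordμ := chain_bounds hμ hlat (s := i) him
  have hcm : u.1 + 1 ≤ (m : ℤ) := by
    have := hbordμ.2.2.1; omega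
  have him' : i < m + n := by
    rcases Nat.lt_or_ge i (m+n) with h | h
    · exact h
    · exfalso
      have hieq : i = m + n := by omega
      have e := hν.2.2.1 i (by omega)
      have : (ν i).1 = (m : ℤ) := by rw [e]
      omega
  have hPmn : i < m + n ∧ u.1 + 1 ≤ (ν (m+n)).1 := by
    refine ⟨him', ?_⟩
    have e := hν.2.2.1 (m+n) le_rfl
    rw [e]; exact hcm
  have hex : ∃ t, i < t ∧ u.1 + 1 ≤ (ν t).1 := ⟨m + n, hPmn⟩
  set j := Nat.find hex with hj
  obtain ⟨hij, hcj⟩ : i < j ∧ u.1 + 1 ≤ (ν j).1 := Nat.find_spec hex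
  have hjmn : j ≤ m + n := Nat.find_le hPmn
  have hprev1 : (ν (j-1)).1 = u.1 := by
    have hge : u.1 ≤ (ν (j-1)).1 := by
      have := (chain_mono hν (s := i) (t := j-1) (by omega) (by omega)).1
      omega
    rcases Nat.lt_or_ge i (j-1) with h | h
    · have hnot := Nat.find_min hex (m := j-1) (by omega)
      push_neg at hnot
      have := hnot h
      omega
    · have e : j - 1 = i := by omega
      rw [e]
      omega
  have sjR : ν j = ν (j-1) + (1,0) := by
    rcases chain_step hν (s := j) (by omega) hjmn with h | h
    · exact h
    · exfalso
      have : (ν j).1 = (ν (j-1)).1 := by rw [h]; simp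
      omega
  have hνj1 : (ν j).1 = u.1 + 1 := by
    have : (ν j).1 = (ν (j-1)).1 + 1 := by rw [sjR]; simp
    omega
  set y := (ν (j-1)).2 with hy
  have hνj2 : (ν j).2 = y := by rw [sjR]; simp; exact hy.symm
  have hyr : u.2 + 1 ≤ y := by
    have := (chain_mono hν (s := i) (t := j-1) (by omega) (by omega)).2
    omega
  have sj1U : ν (j-1) = ν (j-1-1) + (0,1) := by
    rcases Nat.lt_or_ge i (j-1) with h | h
    · exact const_col hν (a := i) (b := j-1) (by omega) (by omega) (by omega) (s := j-1)
        h le_rfl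
    · have e : j - 1 = i := by omega
      have e2 : j - 1 - 1 = i - 1 := by omega
      rw [e2, e]
      exact sν
  obtain ⟨p', hp'⟩ := exists_isBRow hlat (r := y) (chain_mem hν (s := j-1) (by omega)) hy.le
  have hp'JI : p' ∈ JoinIrr X := by
    refine isBRow_joinIrr hlat hp' (chain_mem hν (s := j-1-1) (by omega)) ?_
    have : (ν (j-1)).2 = (ν (j-1-1)).2 + 1 := by rw [sj1U]; simp
    omega
  have hqp' : q ≤ p' := isBRow_mono hq hp' hyr
  have hdesc : DescentAt X ω ν (j-1) := by
    refine descentAt_of_UR hν (by omega) (by omega) sj1U (p := p') (q := p) ?_ ?_ hp'JI hpJI ?_ ?_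
    · rwa [← hy]
    · have e : j - 1 + 1 = j := by omega
      rw [e, hνj1]
      exact hp
    · have e : j - 1 + 1 = j := by omega
      rw [e]
      omega
    · have := hω.2 q hqJI p' hp'JI hqp'
      omega
  refine ⟨ν j, ⟨j-1, ⟨by omega, by omega, hdesc⟩, ?_⟩, ?_⟩
  · show ν (j - 1 + 1) = ν j
    congr 1
    omega
  · rintro ⟨t, ⟨ht1, ht2, htd⟩, hteq⟩
    have hteq' : μ (t+1) = ν j := hteq
    have hA : (μ (t+1)).1 = u.1 + 1 := by rw [hteq', hνj1]
    have hB : (μ (t+1)).2 = y := by rw [hteq', hνj2]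
    have hti : i ≤ t := by
      by_contra hlt'
      have : μ (t+1) ≤ μ i := chain_mono hμ (by omega) him
      have := this.2
      omega
    have hconst : (μ i).1 = (μ (t+1)).1 := by omega
    rcases desc_struct hμ hlat hω ht1 ht2 htd with ⟨s1t, s2t, p₀, q₀, hp₀, hq₀, hp₀JI, hq₀JI, hlt₀⟩ |
      ⟨s1t, s2t, p₀, q₀, hp₀, hq₀, hp₀JI, hq₀JI, hlt₀⟩
    · rcases Nat.lt_or_ge i t with h | h
      · have hcc := const_col hμ (a := i) (b := t+1) (by omega) (by omega) hconst (s := t)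
          h (by omega)
        rw [s1t] at hcc
        exact stepRU_ne hcc
      · have hit : t = i := by omega
        subst hit
        have hpp : p₀ = p := by
          apply isLCol_unique hp₀
          rw [hμi1]
          exact hp
        have hqq : q₀ = q := by
          apply isBRow_unique hq₀
          have e2 : (μ (t+1)).2 = u.2 + 1 := by
            rw [s2t]; simp; omega
          rw [e2]
          exact hq
        rw [hpp, hqq] at hlt₀
        omega
    · have hcc := const_col hμ (a := i) (b := t+1) (by omega) (by omega) hconst (s := t+1)
        (by omega) le_rfl
      simp only [Nat.add_sub_cancel] at hcc
      rw [s2t] at hcc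
      exact stepRU_ne hcc

lemma core' (hlat : LatticeSetup X m n) (hω : OmegaOK X ω)
    (hμ : IsMaxChainPath X m n μ) (hν : IsMaxChainPath X m n ν)
    {i : ℕ} (hi1 : 1 ≤ i) (him : i ≤ m + n)
    (heq : μ (i-1) = ν (i-1))
    (sμ : μ i = μ (i-1) + (1,0)) (sν : ν i = ν (i-1) + (0,1))
    {p q : ℤ×ℤ} (hp : IsLCol X ((μ (i-1)).1 + 1) p) (hq : IsBRow X ((μ (i-1)).2 + 1) q)
    (hpJI : p ∈ JoinIrr X) (hqJI : q ∈ JoinIrr X)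
    (hcase : ω q < ω p) :
    ∃ s, s ∈ psi X m n ω μ ∧ s ∉ psi X m n ω ν := by
  classical
  set u := μ (i-1) with hu
  have hueq : ν (i-1) = u := heq.symm
  have hνi1 : (ν i).1 = u.1 := by rw [sν, hueq]; simp
  have hνi2 : (ν i).2 = u.2 + 1 := by rw [sν, hueq]; simp
  have hμi1 : (μ i).1 = u.1 + 1 := by rw [sμ]; simp
  have hμi2 : (μ i).2 = u.2 := by rw [sμ]; simp
  have hbordν := chain_bounds hν hlat (s := i) him
  have hrn : u.2 + 1 ≤ (n : ℤ) := by
    have := hbordν.2.2.2; omega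
  have him' : i < m + n := by
    rcases Nat.lt_or_ge i (m+n) with h | h
    · exact h
    · exfalso
      have hieq : i = m + n := by omega
      have e := hμ.2.2.1 i (by omega)
      have : (μ i).2 = (n : ℤ) := by rw [e]
      omega
  have hPmn : i < m + n ∧ u.2 + 1 ≤ (μ (m+n)).2 := by
    refine ⟨him', ?_⟩
    have e := hμ.2.2.1 (m+n) le_rfl
    rw [e]; exact hrn
  have hex : ∃ t, i < t ∧ u.2 + 1 ≤ (μ t).2 := ⟨m + n, hPmn⟩
  set j := Nat.find hex with hj
  obtain ⟨hij, hcj⟩ : i < j ∧ u.2 + 1 ≤ (μ j).2 := Nat.find_spec hex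
  have hjmn : j ≤ m + n := Nat.find_le hPmn
  have hprev2 : (μ (j-1)).2 = u.2 := by
    have hge : u.2 ≤ (μ (j-1)).2 := by
      have := (chain_mono hμ (s := i) (t := j-1) (by omega) (by omega)).2
      omega
    rcases Nat.lt_or_ge i (j-1) with h | h
    · have hnot := Nat.find_min hex (m := j-1) (by omega)
      push_neg at hnot
      have := hnot h
      omega
    · have e : j - 1 = i := by omega
      rw [e]
      omega
  have sjU : μ j = μ (j-1) + (0,1) := by
    rcases chain_step hμ (s := j) (by omega) hjmn with h | h
    · exfalso
      have : (μ j).2 = (μ (j-1)).2 := by rw [h]; simp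
      omega
    · exact h
  have hμj2 : (μ j).2 = u.2 + 1 := by
    have : (μ j).2 = (μ (j-1)).2 + 1 := by rw [sjU]; simp
    omega
  set x := (μ (j-1)).1 with hx
  have hμj1 : (μ j).1 = x := by rw [sjU]; simp; exact hx.symm
  have hxc : u.1 + 1 ≤ x := by
    have := (chain_mono hμ (s := i) (t := j-1) (by omega) (by omega)).1
    omega
  have sj1R : μ (j-1) = μ (j-1-1) + (1,0) := by
    rcases Nat.lt_or_ge i (j-1) with h | h
    · exact const_row hμ (a := i) (b := j-1) (by omega) (by omega) (by omega) (s := j-1)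
        h le_rfl
    · have e : j - 1 = i := by omega
      have e2 : j - 1 - 1 = i - 1 := by omega
      rw [e2, e]
      exact sμ
  obtain ⟨q', hq'⟩ := exists_isLCol hlat (c := x) (chain_mem hμ (s := j-1) (by omega)) hx.le
  have hq'JI : q' ∈ JoinIrr X := by
    refine isLCol_joinIrr hlat hq' (chain_mem hμ (s := j-1-1) (by omega)) ?_
    have : (μ (j-1)).1 = (μ (j-1-1)).1 + 1 := by rw [sj1R]; simp
    omega
  have hpq' : p ≤ q' := isLCol_mono hp hq' hxc
  have hdesc : DescentAt X ω μ (j-1) := by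
    refine descentAt_of_RU hμ (by omega) (by omega) sj1R (p := q') (q := q) ?_ ?_ hq'JI hqJI ?_ ?_
    · rwa [← hx]
    · have e : j - 1 + 1 = j := by omega
      rw [e, hμj2]
      exact hq
    · have e : j - 1 + 1 = j := by omega
      rw [e]
      omega
    · have := hω.2 p hpJI q' hq'JI hpq'
      omega
  refine ⟨μ j, ⟨j-1, ⟨by omega, by omega, hdesc⟩, ?_⟩, ?_⟩
  · show μ (j - 1 + 1) = μ j
    congr 1
    omega
  · rintro ⟨t, ⟨ht1, ht2, htd⟩, hteq⟩
    have hteq' : ν (t+1) = μ j := hteq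
    have hA : (ν (t+1)).1 = x := by rw [hteq', hμj1]
    have hB : (ν (t+1)).2 = u.2 + 1 := by rw [hteq', hμj2]
    have hti : i ≤ t := by
      by_contra hlt'
      have : ν (t+1) ≤ ν i := chain_mono hν (by omega) him
      have := this.1
      omega
    have hconst : (ν i).2 = (ν (t+1)).2 := by omega
    rcases desc_struct hν hlat hω ht1 ht2 htd with ⟨s1t, s2t, p₀, q₀, hp₀, hq₀, hp₀JI, hq₀JI, hlt₀⟩ |
      ⟨s1t, s2t, p₀, q₀, hp₀, hq₀, hp₀JI, hq₀JI, hlt₀⟩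
    · have hcc := const_row hν (a := i) (b := t+1) (by omega) (by omega) hconst (s := t+1)
        (by omega) le_rfl
      simp only [Nat.add_sub_cancel] at hcc
      rw [s2t] at hcc
      exact stepUR_ne hcc
    · rcases Nat.lt_or_ge i t with h | h
      · have hcc := const_row hν (a := i) (b := t+1) (by omega) (by omega) hconst (s := t)
          h (by omega)
        rw [s1t] at hcc
        exact stepUR_ne hcc
      · have hit : t = i := by omega
        subst hit
        have hpp : p₀ = q := by
          apply isBRow_unique hp₀
          rw [hνi2]
          exact hq
        have hqq : q₀ = p := by
          apply isLCol_unique hq₀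
          have e2 : (ν (t+1)).1 = u.1 + 1 := by
            rw [s2t]; simp; omega
          rw [e2]
          exact hp
        rw [hpp, hqq] at hlt₀
        omega

end NCR
namespace NCR

variable {X : Finset (ℤ × ℤ)} {m n : ℕ} {ω : ℤ × ℤ → ℕ}

lemma psi_finite (μ : ℕ → ℤ × ℤ) : (psi X m n ω μ : Set (ℤ×ℤ)).Finite :=
  ((Set.finite_Ico 1 (m+n)).subset (fun i hi => Set.mem_Ico.mpr ⟨hi.1, hi.2.1⟩)).image _

lemma main (hpoly : IsPolyomino X) (hconv : IsConvexPoly X)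
    (hlat : LatticeSetup X m n) (hω : OmegaOK X ω)
    (k : ℕ) : numChains X m n ω k ≤ rook X k := by
  classical
  set F : (ℕ → ℤ×ℤ) → Finset (ℤ×ℤ) :=
    fun μ' => (psi_finite (X := X) (m := m) (n := n) (ω := ω) μ').toFinset with hF
  unfold numChains rook
  have hfin : {S : Finset (ℤ×ℤ) | IsRookConfig X k S}.Finite := by
    apply Set.Finite.subset (X.powerset.finite_toSet)
    intro S hS
    simp only [Finset.coe_powerset, Set.mem_preimage, Set.mem_powerset_iff, Finset.mem_coe,
      Finset.mem_powerset]
    exact Finset.coe_subset.mp hS.1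
  refine Set.ncard_le_ncard_of_injOn F ?_ ?_ hfin
  · -- F maps chains with k descents to k-rook configurations
    rintro μ' ⟨hch, hk⟩
    have hinj : Set.InjOn (fun i => μ' (i+1)) (Des X m n ω μ') := by
      intro i hi j hj hij
      simp only at hij
      have si := chain_sum hch (s := i+1) (by have := hi.2.1; omega)
      have sj := chain_sum hch (s := j+1) (by have := hj.2.1; omega)
      have e1 : (μ' (i+1)).1 = (μ' (j+1)).1 := by rw [hij]
      have e2 : (μ' (i+1)).2 = (μ' (j+1)).2 := by rw [hij]
      omega
    refine ⟨?_, ?_, ?_⟩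
    · -- cells lie in X
      intro s hs
      rw [hF] at hs
      obtain ⟨i, hiD, hieq⟩ := (Set.Finite.mem_toFinset _).mp (Finset.mem_coe.mp hs)
      simp only at hieq
      rw [← hieq]
      exact Finset.mem_coe.mpr (descent_cell hpoly hconv hlat hω hch hiD)
    · -- cardinality k
      rw [hF]
      have h1 : (psi_finite (X := X) (m := m) (n := n) (ω := ω) μ').toFinset.card
          = (psi X m n ω μ' : Set (ℤ×ℤ)).ncard :=
        (Set.ncard_eq_toFinset_card _ _).symm
      rw [h1]
      have h2 : (psi X m n ω μ' : Set (ℤ×ℤ))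
          = (fun i => μ' (i+1)) '' (Des X m n ω μ') := rfl
      rw [h2, Set.ncard_image_of_injOn hinj]
      exact hk
    · -- no two cells in the same row or column
      intro c hc d hd hcd
      obtain ⟨i, hiD, hieq⟩ := (Set.Finite.mem_toFinset _).mp hc
      obtain ⟨j, hjD, hjeq⟩ := (Set.Finite.mem_toFinset _).mp hd
      simp only at hieq hjeq
      rcases lt_trichotomy i j with hij | hij | hij
      · have := rooksep hch hlat hω hiD hjD hij
        rw [hieq, hjeq] at this
        exact ⟨this.1.ne, this.2.ne⟩
      · exact absurd (by rw [← hieq, ← hjeq, hij]) hcd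
      · have := rooksep hch hlat hω hjD hiD hij
        rw [hieq, hjeq] at this
        exact ⟨this.1.ne', this.2.ne'⟩
  · -- injectivity of F on chains
    rintro μ₁ ⟨hch₁, hk₁⟩ μ₂ ⟨hch₂, hk₂⟩ hFeq
    have hpsi : psi X m n ω μ₁ = psi X m n ω μ₂ := by
      rw [hF] at hFeq
      exact Set.Finite.toFinset_inj.mp hFeq
    by_contra hne
    have hex : ∃ s, μ₁ s ≠ μ₂ s := Function.ne_iff.mp hne
    set i := Nat.find hex with hi
    have hispec : μ₁ i ≠ μ₂ i := Nat.find_spec hex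
    have hmin : ∀ s, s < i → μ₁ s = μ₂ s := fun s hs => not_not.mp (Nat.find_min hex hs)
    have hi1 : 1 ≤ i := by
      rcases Nat.eq_zero_or_pos i with h | h
      · exact absurd (by rw [h, hch₁.1, hch₂.1]) hispec
      · exact h
    have him : i ≤ m + n := by
      by_contra h
      exact hispec (by rw [hch₁.2.2.1 i (by omega), hch₂.2.2.1 i (by omega)])
    have heq : μ₁ (i-1) = μ₂ (i-1) := hmin _ (by omega)
    have st₁ := chain_step hch₁ hi1 him
    have st₂ := chain_step hch₂ hi1 him
    have key : ∀ (α β : ℕ → ℤ×ℤ), IsMaxChainPath X m n α → IsMaxChainPath X m n β →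
        α (i-1) = β (i-1) → α i = α (i-1) + (1,0) → β i = β (i-1) + (0,1) →
        psi X m n ω α = psi X m n ω β → False := by
      intro α β hα hβ hαβ sα sβ hψ
      have hVu : α (i-1) ∈ Verts X := chain_mem hα (by omega)
      have hVαi : α i ∈ Verts X := chain_mem hα him
      have hVβi : β i ∈ Verts X := chain_mem hβ him
      have e1 : (α i).1 = (α (i-1)).1 + 1 := by rw [sα]; simp
      have e2 : (β i).2 = (α (i-1)).2 + 1 := by rw [sβ, ← hαβ]; simp
      obtain ⟨p, hp⟩ := exists_isLCol hlat hVαi e1.ge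
      obtain ⟨q, hq⟩ := exists_isBRow hlat hVβi e2.ge
      have hpJI : p ∈ JoinIrr X := isLCol_joinIrr hlat hp hVu (by omega)
      have hqJI : q ∈ JoinIrr X := isBRow_joinIrr hlat hq hVu (by omega)
      have hpq : p ≠ q := by
        intro hpq'
        have h1 : (α (i-1)).1 + 1 ≤ p.1 := hp.2.1
        have h2 : q ≤ β i := hq.2.2 _ hVβi e2.ge
        have h3 : (β i).1 = (α (i-1)).1 := by rw [sβ, ← hαβ]; simp
        have h4 := h2.1
        rw [hpq'] at h1
        omega
      have hωne : ω p ≠ ω q := fun h => hpq (hω.1 hpJI hqJI h)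
      rcases lt_or_gt_of_ne hωne with hlt | hlt
      · obtain ⟨s, hs1, hs2⟩ := core hlat hω hα hβ hi1 him hαβ sα sβ hp hq hpJI hqJI hlt
        rw [← hψ] at hs1
        exact hs2 hs1
      · obtain ⟨s, hs1, hs2⟩ := core' hlat hω hα hβ hi1 him hαβ sα sβ hp hq hpJI hqJI hlt
        rw [hψ] at hs1
        exact hs2 hs1
    rcases st₁ with s₁ | s₁ <;> rcases st₂ with s₂ | s₂
    · exact hispec (by rw [s₁, s₂, heq])
    · exact key μ₁ μ₂ hch₁ hch₂ heq s₁ s₂ hpsi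
    · exact key μ₂ μ₁ hch₂ hch₁ heq.symm s₂ s₁ hpsi.symm
    · exact hispec (by rw [s₁, s₂, heq])

end NCR

theorem numChains_le_rook (X : Finset (ℤ × ℤ)) (m n : ℕ)
    (hpoly : IsPolyomino X) (hconv : IsConvexPoly X)
    (hlat : LatticeSetup X m n)
    (ω : ℤ × ℤ → ℕ) (hω : OmegaOK X ω) :
    ∀ k : ℕ, numChains X m n ω k ≤ rook X k := by
  intro k
  exact NCR.main hpoly hconv hlat hω k
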